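/- Let F be a free group and let a, b ∈ F be nontrivial elements such that the cyclic subgroups ⟨a⟩ and ⟨b⟩ are commensurable (their intersection has finite index in both). Then a and b commute. -/

import Mathlib

/-- Every element of a free group on a subsingleton type is an integer power of `of s₀`. -/
private lemma free_sub_pow {S : Type*} [Subsingleton S] (s₀ : S) (z : FreeGroup S) :
    ∃ k : ℤ, z = (FreeGroup.of s₀) ^ k := by
  refine FreeGroup.induction_on z ⟨0, by simp⟩ (fun s => ⟨1, by rw [Subsingleton.elim s s₀, zpow_one]⟩)
    (fun s ⟨k, hk⟩ => ⟨-k, by rw [hk, zpow_neg]⟩)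
    (fun x y ⟨k, hk⟩ ⟨l, hl⟩ => ⟨k + l, by rw [hk, hl, zpow_add]⟩)

private lemma free_comm_of_subsingleton {S : Type*} [Subsingleton S] (x y : FreeGroup S) :
    Commute x y := by
  cases isEmpty_or_nonempty S with
  | inl h =>
    have hz : ∀ z : FreeGroup S, z = 1 := fun z =>
      FreeGroup.induction_on z rfl (fun s => (h.false s).elim)
        (fun s _ => (h.false s).elim) (fun a b ha hb => by rw [ha, hb, one_mul]
        )
    rw [Commute, SemiconjBy, hz x, hz y]
  | inr h =>
    obtain ⟨s₀⟩ := h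
    obtain ⟨k, hk⟩ := free_sub_pow s₀ x
    obtain ⟨l, hl⟩ := free_sub_pow s₀ y
    rw [hk, hl]
    exact (Commute.refl _).zpow_zpow k l

/-- A nontrivial subgroup of a free group is infinite. -/
private lemma infinite_of_ne_bot {α : Type*} (K : Subgroup (FreeGroup α)) (hK : K ≠ ⊥) :
    Infinite K := by
  let T := IsFreeGroup.Generators K
  have e : K ≃* FreeGroup T := IsFreeGroup.toFreeGroup K
  cases isEmpty_or_nonempty T with
  | inl h =>
    exfalso
    apply hK
    have hsub : Subsingleton (FreeGroup T) := by
      constructor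
      intro x y
      have hz : ∀ z : FreeGroup T, z = 1 := fun z =>
        FreeGroup.induction_on z rfl (fun s => (h.false s).elim)
          (fun s _ => (h.false s).elim) (fun a b ha hb => by rw [ha, hb, one_mul])
      rw [hz x, hz y]
    have : Subsingleton K := e.toEquiv.subsingleton
    ext g
    simp only [Subgroup.mem_bot]
    constructor
    · intro hg
      have : (⟨g, hg⟩ : K) = (⟨1, K.one_mem⟩ : K) := Subsingleton.elim _ _
      exact congrArg Subtype.val this
    · rintro rfl; exact K.one_mem
  | inr h =>
    have : Infinite (FreeGroup T) := inferInstance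
    exact e.toEquiv.infinite_iff.mpr this

/-- In a free group generated by two elements `x, y` with `x^m = y^n`, `m, n ≠ 0`,
the two elements commute (the free group has rank at most one). -/
private lemma key_lemma {S : Type*} (x y : FreeGroup S)
    (htop : Subgroup.closure ({x, y} : Set (FreeGroup S)) = ⊤)
    (m n : ℤ) (hm : m ≠ 0) (hn : n ≠ 0) (hxy : x ^ m = y ^ n) : Commute x y := by
  -- abelianization map to S →₀ ℤ
  have hsub : Subsingleton S := by
    constructor
    intro s t
    by_contra hst
    -- the abelianization map
    let φ : FreeGroup S →* Multiplicative (S →₀ ℤ) :=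
      FreeGroup.lift fun s => Multiplicative.ofAdd (Finsupp.single s (1 : ℤ))
    set u : S →₀ ℤ := Multiplicative.toAdd (φ x) with hu
    set v : S →₀ ℤ := Multiplicative.toAdd (φ y) with hv
    have hrel : m • u = n • v := by
      have := congrArg φ hxy
      rw [map_zpow, map_zpow] at this
      have := congrArg Multiplicative.toAdd this
      simpa [toAdd_zpow] using this
    -- every single s 1 lies in the ℤ-span of {u, v}
    have hP : ∀ z ∈ Subgroup.closure ({x, y} : Set (FreeGroup S)),
        Multiplicative.toAdd (φ z) ∈ Submodule.span ℤ ({u, v} : Set (S →₀ ℤ)) := by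
      intro z hz
      refine Subgroup.closure_induction ?_ ?_ ?_ ?_ hz
      · rintro w (rfl | rfl)
        · exact Submodule.subset_span (by left; rfl)
        · exact Submodule.subset_span (by right; rfl)
      · simpa using Submodule.zero_mem _
      · intro p q _ _ hp hq
        rw [map_mul]
        exact Submodule.add_mem _ hp hq
      · intro p _ hp
        rw [map_inv]
        simpa using Submodule.neg_mem _ hp
    have hspan : ∀ w : S, (Finsupp.single w (1 : ℤ)) ∈ Submodule.span ℤ ({u, v} : Set (S →₀ ℤ)) := by
      intro w
      have hw : FreeGroup.of w ∈ Subgroup.closure ({x, y} : Set (FreeGroup S)) := by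
        rw [htop]; trivial
      have := hP _ hw
      simpa [φ] using this
    obtain ⟨p, q, hpq⟩ := Submodule.mem_span_pair.mp (hspan s)
    obtain ⟨p', q', hpq'⟩ := Submodule.mem_span_pair.mp (hspan t)
    -- multiply by n to express in terms of u only
    have key : ∀ (p q : ℤ) (w : S), p • u + q • v = Finsupp.single w (1 : ℤ) →
        n • Finsupp.single w (1 : ℤ) = (n * p + q * m) • u := by
      intro p q w hw
      have h0 : n • Finsupp.single w (1 : ℤ) = n • (p • u + q • v) := by rw [hw]
      rw [h0, smul_add, smul_smul, smul_smul, add_smul]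
      congr 1
      rw [mul_comm n q, ← smul_smul, ← hrel, smul_smul]
    have h1 := key p q s hpq
    have h2 := key p' q' t hpq'
    set c := n * p + q * m with hc
    set c' := n * p' + q' * m with hc'
    -- evaluate at coordinates s and t
    have e1 : c * u s = n := by
      have := congrArg (fun f : S →₀ ℤ => f s) h1
      simpa [Finsupp.single_apply, mul_comm] using this.symm
    have e2 : c * u t = 0 := by
      have := congrArg (fun f : S →₀ ℤ => f t) h1
      simpa [Finsupp.single_apply, Ne.symm hst, hst] using this.symm
    have e3 : c' * u s = 0 := by
      have := congrArg (fun f : S →₀ ℤ => f s) h2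
      simpa [Finsupp.single_apply, Ne.symm hst, hst] using this.symm
    have e4 : c' * u t = n := by
      have := congrArg (fun f : S →₀ ℤ => f t) h2
      simpa [Finsupp.single_apply, mul_comm] using this.symm
    have hus : u s ≠ 0 := fun h0 => hn (by rw [← e1, h0, mul_zero])
    have hc'0 : c' = 0 := by
      rcases mul_eq_zero.mp e3 with h0 | h0
      · exact h0
      · exact absurd h0 hus
    exact hn (by rw [← e4, hc'0, zero_mul])
  exact free_comm_of_subsingleton x y

theorem stmt_6 {α : Type*} (a b : FreeGroup α) (ha : a ≠ 1) (hb : b ≠ 1)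
    (h : Subgroup.Commensurable (Subgroup.zpowers a) (Subgroup.zpowers b)) : a * b = b * a := by
  -- Step 1: find a common nontrivial power a^m = b^n
  have hbne : Subgroup.zpowers b ≠ ⊥ := fun hbot => hb (Subgroup.zpowers_eq_bot.mp hbot)
  have hbinf : Infinite (Subgroup.zpowers b) := infinite_of_ne_bot _ hbne
  have hinter : Subgroup.zpowers a ⊓ Subgroup.zpowers b ≠ ⊥ := by
    intro hbot
    have h1 : (Subgroup.zpowers a).relIndex (Subgroup.zpowers b) ≠ 0 := h.1
    rw [← Subgroup.inf_relIndex_right, hbot, Subgroup.relIndex_bot_left] at h1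
    exact h1 (Nat.card_eq_zero_of_infinite)
  obtain ⟨g, hg1⟩ := Subgroup.ne_bot_iff_exists_ne_one.mp hinter
  obtain ⟨hga, hgb⟩ := g.2
  obtain ⟨m, hm⟩ := hga
  obtain ⟨n, hn⟩ := hgb
  have hm' : a ^ m = (g : FreeGroup α) := hm
  have hn' : b ^ n = (g : FreeGroup α) := hn
  have hgne : (g : FreeGroup α) ≠ 1 := fun hh => hg1 (Subtype.ext hh)
  have hm0 : m ≠ 0 := fun h0 => hgne (by rw [← hm', h0, zpow_zero])
  have hn0 : n ≠ 0 := fun h0 => hgne (by rw [← hn', h0, zpow_zero])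
  have hmn : a ^ m = b ^ n := by rw [hm', hn']
  -- Step 2: work in the free subgroup generated by a and b
  set H : Subgroup (FreeGroup α) := Subgroup.closure ({a, b} : Set (FreeGroup α)) with hH
  have haH : a ∈ H := Subgroup.subset_closure (by simp)
  have hbH : b ∈ H := Subgroup.subset_closure (by simp)
  let S := IsFreeGroup.Generators H
  let e : H ≃* FreeGroup S := IsFreeGroup.toFreeGroup H
  set x : FreeGroup S := e ⟨a, haH⟩ with hx
  set y : FreeGroup S := e ⟨b, hbH⟩ with hy
  -- closure {x, y} = ⊤
  have htop : Subgroup.closure ({x, y} : Set (FreeGroup S)) = ⊤ := by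
    have h1 : Subgroup.closure (((↑) : H → FreeGroup α) ⁻¹' ({a, b} : Set (FreeGroup α)))
        = (⊤ : Subgroup H) := Subgroup.closure_closure_coe_preimage
    have hsubset : (((↑) : H → FreeGroup α) ⁻¹' ({a, b} : Set (FreeGroup α)))
        ⊆ {(⟨a, haH⟩ : H), ⟨b, hbH⟩} := by
      rintro ⟨z, hz⟩ hmem
      simp only [Set.mem_preimage, Set.mem_insert_iff, Set.mem_singleton_iff] at hmem ⊢
      rcases hmem with rfl | rfl
      · left; rfl
      · right; rfl
    have h2 : (⊤ : Subgroup H) ≤ Subgroup.closure {(⟨a, haH⟩ : H), ⟨b, hbH⟩} := by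
      rw [← h1]; exact Subgroup.closure_mono hsubset
    have h3 : Subgroup.closure {(⟨a, haH⟩ : H), ⟨b, hbH⟩} = (⊤ : Subgroup H) :=
      le_antisymm le_top h2
    have h4 : Subgroup.map e.toMonoidHom (Subgroup.closure {(⟨a, haH⟩ : H), ⟨b, hbH⟩}) = ⊤ := by
      rw [h3]
      exact Subgroup.map_top_of_surjective _ e.surjective
    rw [MonoidHom.map_closure] at h4
    rw [← h4]
    congr 1
    rw [Set.image_insert_eq, Set.image_singleton]
    rfl
  -- transfer the power relation
  have hmn' : x ^ m = y ^ n := by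
    rw [hx, hy, ← map_zpow, ← map_zpow]
    congr 1
    exact Subtype.ext hmn
  have hcomm : Commute x y := key_lemma x y htop m n hm0 hn0 hmn'
  have h5 : (⟨a, haH⟩ : H) * ⟨b, hbH⟩ = ⟨b, hbH⟩ * ⟨a, haH⟩ := by
    apply e.injective
    rw [map_mul, map_mul]
    exact hcomm.eq
  exact congrArg Subtype.val h5
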